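/- Let S be an intrinsic set with recursive head H in a CADMG G. Then for any set A with H ⊆ A ⊆ S, the intrinsic closure of A equals S: I_G(A) = S. -/

import Mathlib

open Classical

noncomputable section

/-- A conditional acyclic directed mixed graph (CADMG): disjoint sets of random
vertices `V` and fixed vertices `W`, directed edges into `V` with no loops or
directed cycles, symmetric bidirected edges between distinct random vertices,
and every fixed vertex has at least one child. -/
structure CADMG (α : Type) where
  V : Set α
  W : Set α
  dir : Set (α × α)
  bi : Set (α × α)
  disjointVW : Disjoint V W
  dir_mem : ∀ e ∈ dir, e.1 ∈ V ∪ W ∧ e.2 ∈ V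
  dir_irrefl : ∀ e ∈ dir, e.1 ≠ e.2
  acyclic : ∀ a b : α, Relation.ReflTransGen (fun x y => (x, y) ∈ dir) a b →
      Relation.ReflTransGen (fun x y => (x, y) ∈ dir) b a → a = b
  bi_symm : ∀ a b : α, (a, b) ∈ bi → (b, a) ∈ bi
  bi_mem : ∀ e ∈ bi, e.1 ∈ V ∧ e.2 ∈ V
  bi_irrefl : ∀ e ∈ bi, e.1 ≠ e.2
  fixed_child : ∀ w ∈ W, ∃ v, (w, v) ∈ dir

namespace CADMG

variable {α : Type}

/-- The parents of a vertex. -/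
def pa (G : CADMG α) (b : α) : Set α := {a | (a, b) ∈ G.dir}

/-- The parents of a set of vertices. -/
def paSet (G : CADMG α) (A : Set α) : Set α := {a | ∃ b ∈ A, (a, b) ∈ G.dir}

/-- The ancestors of a set of vertices (every vertex is its own ancestor). -/
def anc (G : CADMG α) (A : Set α) : Set α :=
  {w | ∃ v ∈ A, Relation.ReflTransGen (fun x y => (x, y) ∈ G.dir) w v}

/-- An ancestral set contains all of its own ancestors. -/
def Ancestral (G : CADMG α) (A : Set α) : Prop := G.anc A = A

/-- A random-ancestral set: a set of random vertices all of whose ancestors are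
in the set itself or fixed. -/
def RandomAncestral (G : CADMG α) (A : Set α) : Prop :=
  A ⊆ G.V ∧ G.anc A ⊆ A ∪ G.W

/-- The sterile subset of `C`: those members of `C` that are not parents of `C`. -/
def sterile (G : CADMG α) (C : Set α) : Set α := C \ G.paSet C

/-- A bidirected-connected set of random vertices: every two members are joined by
a path of bidirected edges with all intermediate vertices inside the set. -/
def BiConn (G : CADMG α) (B : Set α) : Prop :=
  B ⊆ G.V ∧ ∀ a ∈ B, ∀ b ∈ B,
    Relation.ReflTransGen (fun x y => (x, y) ∈ G.bi ∧ x ∈ B ∧ y ∈ B) a b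

/-- A district: a maximal bidirected-connected set of random vertices. -/
def IsDistrict (G : CADMG α) (D : Set α) : Prop :=
  D.Nonempty ∧ G.BiConn D ∧ ∀ D', G.BiConn D' → D ⊆ D' → D' = D

/-- `dis G B`: the union of the districts of `G` meeting `B`. -/
def dis (G : CADMG α) (B : Set α) : Set α :=
  ⋃₀ {D | G.IsDistrict D ∧ (D ∩ B).Nonempty}

/-- The induced graph `G[C]`: random vertices `C`, fixed vertices `pa_G(C) \ C`,
the bidirected edges of `G` within `C` and the directed edges of `G` pointing
into `C`. -/
def induce (G : CADMG α) (C : Set α) : CADMG α where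
  V := C ∩ G.V
  W := G.paSet (C ∩ G.V) \ (C ∩ G.V)
  dir := {e | e ∈ G.dir ∧ e.2 ∈ C ∩ G.V}
  bi := {e | e ∈ G.bi ∧ e.1 ∈ C ∩ G.V ∧ e.2 ∈ C ∩ G.V}
  disjointVW := by
    rw [Set.disjoint_left]; rintro a ha ⟨-, h⟩; exact h ha
  dir_mem := by
    rintro e ⟨he, h2⟩
    refine ⟨?_, h2⟩
    by_cases h1 : e.1 ∈ C ∩ G.V
    · exact Or.inl h1
    · exact Or.inr ⟨⟨e.2, h2, he⟩, h1⟩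
  dir_irrefl := fun e he => G.dir_irrefl e he.1
  acyclic := fun a b h1 h2 =>
    G.acyclic a b
      (by clear h2; induction h1 with | refl => exact .refl | tail _ h ih => exact ih.tail h.1)
      (by clear h1; induction h2 with | refl => exact .refl | tail _ h ih => exact ih.tail h.1)
  bi_symm := fun a b h => ⟨G.bi_symm a b h.1, h.2.2, h.2.1⟩
  bi_mem := fun e he => ⟨he.2.1, he.2.2⟩
  bi_irrefl := fun e he => G.bi_irrefl e he.1
  fixed_child := by
    rintro w ⟨⟨b, hb, hwb⟩, -⟩
    exact ⟨b, hwb, hb⟩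

/-- A CADMG `G'` is reachable from `G` if it is obtained by iteratively
restricting to a district (`𝔡`) or to a random-ancestral set (`𝔪`). -/
inductive Reach : CADMG α → CADMG α → Prop where
  | refl (G : CADMG α) : Reach G G
  | district {G₁ G₂ : CADMG α} {D : Set α} :
      Reach G₁ G₂ → G₂.IsDistrict D → Reach G₁ (G₂.induce D)
  | margin {G₁ G₂ : CADMG α} {A : Set α} :
      Reach G₁ G₂ → G₂.RandomAncestral A → Reach G₁ (G₂.induce A)

/-- `G₁` is a subgraph of `G₂`. -/
def Subgraph (G₁ G₂ : CADMG α) : Prop :=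
  G₁.V ⊆ G₂.V ∧ G₁.W ⊆ G₂.W ∧ G₁.dir ⊆ G₂.dir ∧ G₁.bi ⊆ G₂.bi

/-- An intrinsic set: a nonempty bidirected-connected set `S` of random vertices
such that `G[S]` is reachable from `G`. -/
def Intrinsic (G : CADMG α) (S : Set α) : Prop :=
  S.Nonempty ∧ G.BiConn S ∧ Reach G (G.induce S)

/-- The recursive heads of `G`: sterile subsets of intrinsic sets. -/
def heads (G : CADMG α) : Set (Set α) :=
  {H | ∃ S, G.Intrinsic S ∧ G.sterile S = H}

/-- The (unique) intrinsic set whose recursive head is `H`. -/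
def intrinsicOf (G : CADMG α) (H : Set α) : Set α :=
  ⋃₀ {S | G.Intrinsic S ∧ G.sterile S = H}

/-- The partial order on recursive heads: `H₁ ≺ H₂` iff the intrinsic set of
`H₁` is strictly contained in that of `H₂`. -/
def headLT (G : CADMG α) (H₁ H₂ : Set α) : Prop :=
  G.intrinsicOf H₁ ⊂ G.intrinsicOf H₂

/-- The tail of a recursive head: the parents of its intrinsic set. -/
def tail (G : CADMG α) (H : Set α) : Set α := G.paSet (G.intrinsicOf H)

/-- One step of the intrinsic-closure iteration: restrict to the ancestors of
`B`, then to the districts meeting `B`. -/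
def closureStep (B : Set α) (G : CADMG α) : CADMG α :=
  (G.induce (G.anc B)).induce ((G.induce (G.anc B)).dis B)

/-- The intrinsic closure `I_G(B)`: the random vertex set of the stable graph
obtained by repeatedly alternating restriction to the ancestors of `B` and to
the districts meeting `B`.  (After `Fintype.card α` rounds the iteration has
stabilised.) -/
def intrinsicClosure [Fintype α] (G : CADMG α) (B : Set α) : Set α :=
  ((closureStep B)^[Fintype.card α] G).V

/-- `Φ_G(C)`: the `≺`-maximal recursive heads of `G` contained in `C`. -/
def Phi (G : CADMG α) (C : Set α) : Set (Set α) :=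
  {H | H ∈ G.heads ∧ H ⊆ C ∧ ∀ H' ∈ G.heads, H' ⊆ C → H' ≠ H → ¬ G.headLT H H'}

/-- `ψ_G(C) = C \ ⋃ Φ_G(C)`. -/
def psi (G : CADMG α) (C : Set α) : Set α := C \ ⋃₀ G.Phi C

/-- The recursive-head partition `⟨C⟩_G`, defined by `⟨∅⟩ = ∅` and
`⟨C⟩ = Φ(C) ∪ ⟨ψ(C)⟩`.  (The guard on cardinalities is automatically satisfied
whenever the recursion is used, since `ψ_G(C) ⊊ C` for nonempty `C`.) -/
def partn (G : CADMG α) (C : Set α) : Set (Set α) :=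
  if C = ∅ then ∅
  else if h : (G.psi C).ncard < C.ncard then G.Phi C ∪ G.partn (G.psi C)
  else G.Phi C
termination_by C.ncard
decreasing_by exact h

/-- A kernel `p_{V|W}`, written as a function of a full assignment of binary
values to all vertices: it takes values in `[0,1]`, depends only on the
coordinates in `V ∪ W`, and for every assignment to `W` (and the remaining
coordinates) the values summed over assignments to `V` equal `1`. -/
def IsKernel [Fintype α] (V W : Set α) (p : (α → Bool) → ℝ) : Prop :=
  (∀ x, 0 ≤ p x ∧ p x ≤ 1) ∧
  (∀ x y : α → Bool, (∀ v ∈ V ∪ W, x v = y v) → p x = p y) ∧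
  (∀ x : α → Bool, ∑ g : α → Bool,
      (if ∀ v, v ∉ V → g v = x v then p g else 0) = 1)

/-- Sum a function of assignments over all values of the coordinates in `D`
(the marginal summing out the variables in `D`). -/
def marginOut [Fintype α] (D : Set α) (p : (α → Bool) → ℝ) (x : α → Bool) : ℝ :=
  ∑ g : α → Bool, if ∀ v, v ∉ D → g v = x v then p g else 0

/-- `q` is a version of the conditional kernel of `A` given `B` and `W`, derived
from the kernel `p = p_{V|W}`. -/
def IsCondVersion [Fintype α] (V W A B : Set α)
    (p q : (α → Bool) → ℝ) : Prop :=
  IsKernel A (B ∪ W) q ∧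
  ∀ x : α → Bool, q x * marginOut (V \ B) p x = marginOut (V \ (A ∪ B)) p x

/-- Recursive factorization of a kernel `p` according to a CADMG `G`
(the nested Markov property): either `|V| = 1`, or (i) `p` factorizes into
kernels indexed by the districts of `G`, each of which (when there are at least
two districts) recursively factorizes according to the induced graph, and
(ii) for every ancestral set `A` with `V \ A ≠ ∅` the margin over `A` does not
depend on the fixed coordinates outside `A` and recursively factorizes
according to `G[V ∩ A]`. -/
inductive RF [Fintype α] : CADMG α → ((α → Bool) → ℝ) → Prop where
  | base (G : CADMG α) (p : (α → Bool) → ℝ) (h : G.V.ncard = 1) : RF G p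
  | factor (G : CADMG α) (p : (α → Bool) → ℝ)
      (Ds : Finset (Set α)) (r : Set α → (α → Bool) → ℝ)
      (hDs : ∀ D, G.IsDistrict D ↔ D ∈ Ds)
      (hker : ∀ D ∈ Ds, IsKernel D (G.paSet D \ D) (r D))
      (hfact : ∀ x, p x = ∏ D ∈ Ds, r D x)
      (hrec : 2 ≤ Ds.card → ∀ D ∈ Ds, RF (G.induce D) (r D))
      (hmarg_nodep : ∀ A : Set α, G.Ancestral A → (G.V \ A).Nonempty →
        ∀ x y : α → Bool, (∀ v ∈ (G.V ∩ A) ∪ (G.W ∩ A), x v = y v) →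
          marginOut (G.V \ A) p x = marginOut (G.V \ A) p y)
      (hmarg_rf : ∀ A : Set α, G.Ancestral A → (G.V \ A).Nonempty →
        RF (G.induce (G.V ∩ A)) (marginOut (G.V \ A) p)) :
      RF G p

/-- The alternating sum `Σ_{O ⊆ C ⊆ U} (−1)^{|C\O|} ∏_{H ∈ ⟨C⟩_G} q_H(x_T)`. -/
def altSum (G : CADMG α) (q : Set α → (α → Bool) → ℝ) (x : α → Bool)
    (O U : Set α) : ℝ :=
  ∑ᶠ C ∈ {C : Set α | O ⊆ C ∧ C ⊆ U},
    (-1 : ℝ) ^ (C \ O).ncard * ∏ᶠ H ∈ G.partn C, q H x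

/-- A kernel `p` is parameterized according to `G`: there are parameters
`q_H(x_T)` (one real number for each recursive head `H` and each value `x_T` of
its tail `T`) with
`p(x_V | x_W) = Σ_{O ⊆ C ⊆ V} (−1)^{|C\O|} ∏_{H ∈ ⟨C⟩_G} q_H(x_T)`,
where `O = {v ∈ V : x_v = 0}`. -/
def Parameterized [Fintype α] (G : CADMG α) (p : (α → Bool) → ℝ) : Prop :=
  ∃ q : Set α → (α → Bool) → ℝ,
    (∀ H ∈ G.heads, ∀ x y : α → Bool,
        (∀ v ∈ G.tail H, x v = y v) → q H x = q H y) ∧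
    ∀ x : α → Bool,
      p x = G.altSum q x {v | v ∈ G.V ∧ x v = false} G.V

end CADMG


section Aux

theorem Relation.ReflTransGen.monoR {α : Type} {r p : α → α → Prop} {a b : α}
    (hab : Relation.ReflTransGen r a b) (h : ∀ x y, r x y → p x y) :
    Relation.ReflTransGen p a b := by
  induction hab with
  | refl => exact .refl
  | tail _ hh ih => exact ih.tail (h _ _ hh)

theorem Relation.ReflTransGen.symmR {α : Type} {r : α → α → Prop} (hs : Symmetric r)
    {a b : α} (hab : Relation.ReflTransGen r a b) : Relation.ReflTransGen r b a := by
  induction hab with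
  | refl => exact .refl
  | tail _ hh ih => exact ih.head (hs hh)

namespace CADMG

variable {α : Type}

lemma eq_of_fields {G₁ G₂ : CADMG α} (hV : G₁.V = G₂.V) (hW : G₁.W = G₂.W)
    (hd : G₁.dir = G₂.dir) (hb : G₁.bi = G₂.bi) : G₁ = G₂ := by
  cases G₁; cases G₂
  simp only at hV hW hd hb
  subst hV; subst hW; subst hd; subst hb
  rfl

lemma induce_V' (G : CADMG α) (C : Set α) : (G.induce C).V = C ∩ G.V := rfl

lemma induce_paSet' (G : CADMG α) {C X : Set α} (hX : X ⊆ C ∩ G.V) :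
    (G.induce C).paSet X = G.paSet X := by
  ext a
  constructor
  · rintro ⟨b, hb, hd, -⟩; exact ⟨b, hb, hd⟩
  · rintro ⟨b, hb, hd⟩; exact ⟨b, hb, hd, hX hb⟩

lemma induce_self (G : CADMG α) : G.induce G.V = G := by
  have hVV : G.V ∩ G.V = G.V := Set.inter_self _
  apply eq_of_fields
  · exact hVV
  · show G.paSet (G.V ∩ G.V) \ (G.V ∩ G.V) = G.W
    rw [hVV]
    ext a
    constructor
    · rintro ⟨⟨b, hb, hd⟩, ha⟩
      rcases (G.dir_mem _ hd).1 with h | h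
      · exact absurd h ha
      · exact h
    · intro ha
      obtain ⟨v, hv⟩ := G.fixed_child a ha
      exact ⟨⟨v, (G.dir_mem _ hv).2, hv⟩, fun hav => Set.disjoint_left.mp G.disjointVW hav ha⟩
  · ext e
    constructor
    · rintro ⟨h, -⟩; exact h
    · intro h; exact ⟨h, by rw [hVV]; exact (G.dir_mem _ h).2⟩
  · ext e
    constructor
    · rintro ⟨h, -⟩; exact h
    · intro h
      exact ⟨h, by rw [hVV]; exact (G.bi_mem _ h).1, by rw [hVV]; exact (G.bi_mem _ h).2⟩

lemma induce_induce_of_subset (G : CADMG α) {C E : Set α} (hE : E ⊆ C ∩ G.V) :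
    (G.induce C).induce E = G.induce E := by
  have hEsubV : E ⊆ G.V := fun x hx => (hE hx).2
  have hEC : E ∩ (G.induce C).V = E := by
    ext x; exact ⟨fun h => h.1, fun h => ⟨h, hE h⟩⟩
  have hEV : E ∩ G.V = E := by
    ext x; exact ⟨fun h => h.1, fun h => ⟨h, hEsubV h⟩⟩
  apply eq_of_fields
  · show E ∩ (G.induce C).V = E ∩ G.V
    rw [hEC, hEV]
  · show (G.induce C).paSet (E ∩ (G.induce C).V) \ (E ∩ (G.induce C).V)
        = G.paSet (E ∩ G.V) \ (E ∩ G.V)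
    rw [hEC, hEV, induce_paSet' G hE]
  · ext e
    constructor
    · rintro ⟨⟨h1, -⟩, h2⟩
      rw [hEC] at h2
      exact ⟨h1, by rw [hEV]; exact h2⟩
    · rintro ⟨h1, h2⟩
      rw [hEV] at h2
      exact ⟨⟨h1, hE h2⟩, by rw [hEC]; exact h2⟩
  · ext e
    constructor
    · rintro ⟨⟨h1, -, -⟩, h2, h3⟩
      rw [hEC] at h2 h3
      exact ⟨h1, by rw [hEV]; exact h2, by rw [hEV]; exact h3⟩
    · rintro ⟨h1, h2, h3⟩
      rw [hEV] at h2 h3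
      exact ⟨⟨h1, hE h2, hE h3⟩, by rw [hEC]; exact h2, by rw [hEC]; exact h3⟩

/-- The bidirected adjacency relation restricted to random vertices. -/
def biR (H : CADMG α) (x y : α) : Prop := (x, y) ∈ H.bi ∧ x ∈ H.V ∧ y ∈ H.V

lemma biR_symm (H : CADMG α) : Symmetric H.biR :=
  fun x y h => ⟨H.bi_symm _ _ h.1, h.2.2, h.2.1⟩

/-- The bidirected-connected component of a vertex. -/
def comp (H : CADMG α) (a : α) : Set α := {v | Relation.ReflTransGen H.biR a v}

lemma mem_comp_self (H : CADMG α) (a : α) : a ∈ H.comp a :=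
  Relation.ReflTransGen.refl

lemma comp_subset_V (H : CADMG α) {a : α} (ha : a ∈ H.V) : H.comp a ⊆ H.V := by
  intro v hv
  rcases Relation.ReflTransGen.cases_tail hv with h | ⟨c, -, hcv⟩
  · rw [h]; exact ha
  · exact hcv.2.2

lemma comp_rtg_within (H : CADMG α) {a v : α}
    (h : Relation.ReflTransGen H.biR a v) :
    Relation.ReflTransGen
      (fun x y => (x, y) ∈ H.bi ∧ x ∈ H.comp a ∧ y ∈ H.comp a) a v := by
  induction h with
  | refl => exact Relation.ReflTransGen.refl
  | tail hab hbc ih =>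
      exact ih.tail ⟨hbc.1, hab, hab.tail hbc⟩

lemma comp_biConn (H : CADMG α) {a : α} (ha : a ∈ H.V) : H.BiConn (H.comp a) := by
  refine ⟨H.comp_subset_V ha, fun u hu v hv => ?_⟩
  have hsymm : Symmetric (fun x y => (x, y) ∈ H.bi ∧ x ∈ H.comp a ∧ y ∈ H.comp a) :=
    fun x y h => ⟨H.bi_symm _ _ h.1, h.2.2, h.2.1⟩
  exact Relation.ReflTransGen.trans
    (Relation.ReflTransGen.symmR hsymm (H.comp_rtg_within hu))
    (H.comp_rtg_within hv)

lemma comp_isDistrict (H : CADMG α) {a : α} (ha : a ∈ H.V) :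
    H.IsDistrict (H.comp a) := by
  refine ⟨⟨a, H.mem_comp_self a⟩, H.comp_biConn ha, fun D' hD' hsub => ?_⟩
  apply Set.Subset.antisymm _ hsub
  intro v hv
  have := hD'.2 a (hsub (H.mem_comp_self a)) v hv
  exact this.monoR fun x y h => ⟨h.1, hD'.1 h.2.1, hD'.1 h.2.2⟩

lemma district_eq_comp (H : CADMG α) {D : Set α} {a : α}
    (hD : H.IsDistrict D) (ha : a ∈ D) : D = H.comp a := by
  have haV : a ∈ H.V := hD.2.1.1 ha
  have hsub : D ⊆ H.comp a := by
    intro v hv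
    exact (hD.2.1.2 a ha v hv).monoR fun x y h => ⟨h.1, hD.2.1.1 h.2.1, hD.2.1.1 h.2.2⟩
  exact (hD.2.2 _ (H.comp_biConn haV) hsub).symm

lemma dis_eq_comp (H : CADMG α) (A : Set α) :
    H.dis A = {v | ∃ a ∈ A ∩ H.V, v ∈ H.comp a} := by
  ext v
  constructor
  · rintro ⟨D, ⟨hD, b, hbD, hbA⟩, hv⟩
    refine ⟨b, ⟨hbA, hD.2.1.1 hbD⟩, ?_⟩
    rw [← H.district_eq_comp hD hbD]
    exact hv
  · rintro ⟨a, ⟨haA, haV⟩, hv⟩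
    exact ⟨H.comp a, ⟨H.comp_isDistrict haV, a, H.mem_comp_self a, haA⟩, hv⟩

lemma dis_subset_V (H : CADMG α) (A : Set α) : H.dis A ⊆ H.V := by
  rw [dis_eq_comp]
  rintro v ⟨a, ⟨-, haV⟩, hv⟩
  exact H.comp_subset_V haV hv

lemma exists_sterile_rtg [Finite α] (G : CADMG α) (S : Set α) :
    ∀ s ∈ S, ∃ h ∈ G.sterile S,
      Relation.ReflTransGen (fun x y => (x, y) ∈ G.dir ∧ x ∈ S ∧ y ∈ S) s h := by
  set r : α → α → Prop := fun t s => (s, t) ∈ G.dir ∧ s ∈ S ∧ t ∈ S with hr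
  have hirr : ∀ a, ¬ Relation.TransGen r a a := by
    intro a h
    obtain ⟨c, hac, hca⟩ := (Relation.TransGen.tail'_iff).mp h
    have h1 : Relation.ReflTransGen (fun x y => (x, y) ∈ G.dir) c a := by
      clear hca
      induction hac with
      | refl => exact Relation.ReflTransGen.refl
      | tail hab hbc ih => exact Relation.ReflTransGen.head hbc.1 ih
    have h2 : Relation.ReflTransGen (fun x y => (x, y) ∈ G.dir) a c :=
      Relation.ReflTransGen.single hca.1
    have hac' : a = c := G.acyclic a c h2 h1
    subst hac'
    exact G.dir_irrefl (a, a) hca.1 rfl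
  have hwf : WellFounded r := by
    have h1 : IsTrans α (Relation.TransGen r) := ⟨fun _ _ _ ha hb => ha.trans hb⟩
    have h2 : IsIrrefl α (Relation.TransGen r) := ⟨hirr⟩
    exact Subrelation.wf (fun {x y} h => Relation.TransGen.single h)
      (Finite.wellFounded_of_trans_of_irrefl _)
  intro s
  induction s using hwf.induction with
  | _ x ih =>
    intro hx
    by_cases hster : x ∈ G.sterile S
    · exact ⟨x, hster, Relation.ReflTransGen.refl⟩
    · have hpa : x ∈ G.paSet S := by
        by_contra hpa
        exact hster ⟨hx, hpa⟩
      obtain ⟨b, hbS, hxb⟩ := hpa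
      obtain ⟨hh, hhs, hpath⟩ := ih b ⟨hxb, hx, hbS⟩ hbS
      exact ⟨hh, hhs, Relation.ReflTransGen.head ⟨hxb, hx, hbS⟩ hpath⟩

lemma closureStep_V_eq (G : CADMG α) (A X : Set α) :
    (closureStep A (G.induce X)).V
      = ((G.induce X).induce ((G.induce X).anc A)).dis A := by
  show ((G.induce X).induce ((G.induce X).anc A)).dis A
      ∩ ((G.induce X).induce ((G.induce X).anc A)).V = _
  exact Set.inter_eq_self_of_subset_left (dis_subset_V _ _)

lemma closureStep_V_subset (G : CADMG α) (A X : Set α) :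
    (closureStep A (G.induce X)).V ⊆ X ∩ G.V := by
  rw [closureStep_V_eq]
  intro x hx
  exact (dis_subset_V _ _ hx).2

lemma closureStep_eq_induce (G : CADMG α) (A X : Set α) :
    closureStep A (G.induce X) = G.induce ((closureStep A (G.induce X)).V) := by
  rw [closureStep_V_eq]
  have hsub : ((G.induce X).induce ((G.induce X).anc A)).dis A
      ⊆ ((G.induce X).anc A) ∩ (G.induce X).V := dis_subset_V _ _
  have h1 : ((G.induce X).induce ((G.induce X).anc A)).induce
        (((G.induce X).induce ((G.induce X).anc A)).dis A)
      = (G.induce X).induce (((G.induce X).induce ((G.induce X).anc A)).dis A) :=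
    induce_induce_of_subset _ hsub
  have h2 : (G.induce X).induce (((G.induce X).induce ((G.induce X).anc A)).dis A)
      = G.induce (((G.induce X).induce ((G.induce X).anc A)).dis A) :=
    induce_induce_of_subset _ (fun x hx => (hsub hx).2)
  exact h1.trans h2

lemma anc_induce_mono (G : CADMG α) (A : Set α) {X X' : Set α} (h : X ⊆ X') :
    (G.induce X).anc A ⊆ (G.induce X').anc A := by
  rintro w ⟨b, hbA, hp⟩
  exact ⟨b, hbA, hp.monoR fun p q hpq => ⟨hpq.1, h hpq.2.1, hpq.2.2⟩⟩

lemma cstep_mono (G : CADMG α) (A : Set α) {X X' : Set α} (h : X ⊆ X') :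
    (closureStep A (G.induce X)).V ⊆ (closureStep A (G.induce X')).V := by
  rw [closureStep_V_eq, closureStep_V_eq, dis_eq_comp, dis_eq_comp]
  have hZ : ((G.induce X).induce ((G.induce X).anc A)).V
      ⊆ ((G.induce X').induce ((G.induce X').anc A)).V := by
    rintro z ⟨hz1, hz2, hz3⟩
    exact ⟨anc_induce_mono G A h hz1, h hz2, hz3⟩
  rintro x ⟨a, ⟨haA, haV⟩, hx⟩
  refine ⟨a, ⟨haA, hZ haV⟩, ?_⟩
  refine hx.monoR fun p q hpq => ?_
  obtain ⟨hbi, hpV, hqV⟩ := hpq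
  obtain ⟨⟨hGbi, -, -⟩, -, -⟩ := hbi
  have hpV' := hZ hpV
  have hqV' := hZ hqV
  exact ⟨⟨⟨hGbi, hpV'.2, hqV'.2⟩, hpV', hqV'⟩, hpV', hqV'⟩

lemma reach_invariant {G₁ G₂ : CADMG α} (hR : Reach G₁ G₂) (A S W : Set α) :
    A ⊆ S →
    (closureStep A (G₁.induce W)).V = W →
    W ⊆ G₁.V →
    S ⊆ G₂.V → G₂ = G₁.induce G₂.V ∧ W ⊆ G₂.V := by
  induction hR with
  | refl =>
    intro _ _ hWV _
    exact ⟨(induce_self G₁).symm, hWV⟩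
  | district hR2 hD ih =>
    rename_i G₂' D
    intro hAS hW hWV h3
    have hSG₂ : S ⊆ G₂'.V := fun s hs => (h3 hs).2
    obtain ⟨hG₂eq, hWn⟩ := ih hAS hW hWV hSG₂
    have hG₂V : G₂'.V ⊆ G₁.V := by
      intro x hx
      have hx' : x ∈ (G₁.induce G₂'.V).V := by rw [← hG₂eq]; exact hx
      exact hx'.2
    have hDsub : D ⊆ G₂'.V := hD.2.1.1
    constructor
    · have e1 : G₂'.induce D = (G₁.induce G₂'.V).induce D := by rw [← hG₂eq]
      have e2 : (G₁.induce G₂'.V).induce D = G₁.induce D :=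
        induce_induce_of_subset _ (fun x hx => ⟨hDsub hx, hG₂V (hDsub hx)⟩)
      have e3 : (G₂'.induce D).V = D := by
        show D ∩ G₂'.V = D
        exact Set.inter_eq_self_of_subset_left hDsub
      rw [e3, e1, e2]
    · intro x hx
      have hx0 : x ∈ (closureStep A (G₁.induce W)).V := by rw [hW]; exact hx
      rw [closureStep_V_eq, dis_eq_comp] at hx0
      obtain ⟨a, ⟨haA, haZ⟩, hcomp⟩ := hx0
      have haD : a ∈ D := (h3 (hAS haA)).1
      have hpath : Relation.ReflTransGen G₂'.biR a x := by
        refine hcomp.monoR fun p q hpq => ?_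
        obtain ⟨hbi, hpZ, hqZ⟩ := hpq
        have hpW : p ∈ W := hpZ.2.1
        have hqW : q ∈ W := hqZ.2.1
        have hGbi : (p, q) ∈ G₁.bi := hbi.1.1
        refine ⟨?_, hWn hpW, hWn hqW⟩
        rw [hG₂eq]
        exact ⟨hGbi, ⟨hWn hpW, hWV hpW⟩, hWn hqW, hWV hqW⟩
      have hxD : x ∈ D := by
        rw [district_eq_comp G₂' hD haD]
        exact hpath
      exact ⟨hxD, hWn hx⟩
  | margin hR2 hC ih =>
    rename_i G₂' C
    intro hAS hW hWV h3
    have hSG₂ : S ⊆ G₂'.V := fun s hs => (h3 hs).2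
    obtain ⟨hG₂eq, hWn⟩ := ih hAS hW hWV hSG₂
    have hG₂V : G₂'.V ⊆ G₁.V := by
      intro x hx
      have hx' : x ∈ (G₁.induce G₂'.V).V := by rw [← hG₂eq]; exact hx
      exact hx'.2
    have hCsub : C ⊆ G₂'.V := hC.1
    constructor
    · have e1 : G₂'.induce C = (G₁.induce G₂'.V).induce C := by rw [← hG₂eq]
      have e2 : (G₁.induce G₂'.V).induce C = G₁.induce C :=
        induce_induce_of_subset _ (fun x hx => ⟨hCsub hx, hG₂V (hCsub hx)⟩)
      have e3 : (G₂'.induce C).V = C := by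
        show C ∩ G₂'.V = C
        exact Set.inter_eq_self_of_subset_left hCsub
      rw [e3, e1, e2]
    · intro x hx
      have hx0 : x ∈ (closureStep A (G₁.induce W)).V := by rw [hW]; exact hx
      rw [closureStep_V_eq] at hx0
      have hxZ : x ∈ ((G₁.induce W).induce ((G₁.induce W).anc A)).V :=
        dis_subset_V _ _ hx0
      have hxAn : x ∈ (G₁.induce W).anc A := hxZ.1
      obtain ⟨b, hbA, hbp⟩ := hxAn
      have hbC : b ∈ C := (h3 (hAS hbA)).1
      have hxanc : x ∈ G₂'.anc C := by
        refine ⟨b, hbC, hbp.monoR fun p q hpq => ?_⟩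
        rw [hG₂eq]
        exact ⟨hpq.1, hWn hpq.2.1, hpq.2.2⟩
      rcases hC.2 hxanc with hxC | hxW
      · exact ⟨hxC, hWn hx⟩
      · exact absurd hxW (fun hw => Set.disjoint_left.mp G₂'.disjointVW (hWn hx) hw)

end CADMG

end Aux

/-- **Lemma 3 (intrinsic sets are closures of their heads).**  Let `S` be an
intrinsic set of the CADMG `G` with recursive head `H = sterile_G(S)`.  Then
for any set `A` with `H ⊆ A ⊆ S`, the intrinsic closure of `A` is `S`. -/
theorem intrinsicClosure_eq_of_head_subset {α : Type} [Fintype α]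
    (G : CADMG α) (S H A : Set α)
    (hS : G.Intrinsic S) (hH : G.sterile S = H)
    (hHA : H ⊆ A) (hAS : A ⊆ S) :
    G.intrinsicClosure A = S := by
  classical
  obtain ⟨hSne, hSbi, hreach⟩ := hS
  have hSV : S ⊆ G.V := hSbi.1
  have hsterA : G.sterile S ⊆ A := by rw [hH]; exact hHA
  set n := Fintype.card α with hn
  set v : ℕ → Set α := fun k => ((CADMG.closureStep A)^[k] G).V with hv
  have hiter : ∀ k, (CADMG.closureStep A)^[k] G = G.induce (v k) := by
    intro k
    induction k with
    | zero =>
      show G = G.induce G.V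
      exact (G.induce_self).symm
    | succ k ih =>
      have h1 : (CADMG.closureStep A)^[k+1] G
          = CADMG.closureStep A (G.induce (v k)) := by
        rw [Function.iterate_succ_apply', ih]
      have h2 : v (k+1) = (CADMG.closureStep A (G.induce (v k))).V := by
        show ((CADMG.closureStep A)^[k+1] G).V = _
        rw [h1]
      rw [h1, h2]
      exact CADMG.closureStep_eq_induce G A (v k)
  have hvs : ∀ k, v (k+1) = (CADMG.closureStep A (G.induce (v k))).V := by
    intro k
    show ((CADMG.closureStep A)^[k+1] G).V = _
    rw [Function.iterate_succ_apply', hiter k]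
  have hvsub : ∀ k, v (k+1) ⊆ v k ∩ G.V := by
    intro k; rw [hvs k]; exact CADMG.closureStep_V_subset G A (v k)
  have hvV : ∀ k, v k ⊆ G.V := by
    intro k
    cases k with
    | zero => exact fun x hx => hx
    | succ k => exact fun x hx => (hvsub k hx).2
  -- S is contained in every iterate
  have hSstep : ∀ X : Set α, S ⊆ X → S ⊆ (CADMG.closureStep A (G.induce X)).V := by
    intro X hSX
    rw [CADMG.closureStep_V_eq, CADMG.dis_eq_comp]
    have hSanc : S ⊆ (G.induce X).anc A := by
      intro s hs
      obtain ⟨h₀, hh₀, hpath⟩ := CADMG.exists_sterile_rtg G S s hs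
      exact ⟨h₀, hsterA hh₀,
        hpath.monoR fun p q hpq => ⟨hpq.1, hSX hpq.2.2, hSV hpq.2.2⟩⟩
    have hSZ : S ⊆ ((G.induce X).induce ((G.induce X).anc A)).V :=
      fun s hs => ⟨hSanc hs, hSX hs, hSV hs⟩
    intro s hs
    obtain ⟨s₀, hs₀⟩ := hSne
    obtain ⟨a₀, ha₀, -⟩ := CADMG.exists_sterile_rtg G S s₀ hs₀
    have ha₀S : a₀ ∈ S := ha₀.1
    refine ⟨a₀, ⟨hsterA ha₀, hSZ ha₀S⟩, ?_⟩
    refine (hSbi.2 a₀ ha₀S s hs).monoR fun p q hpq => ?_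
    obtain ⟨hGbi, hpS, hqS⟩ := hpq
    exact ⟨⟨⟨hGbi, ⟨hSX hpS, hSV hpS⟩, ⟨hSX hqS, hSV hqS⟩⟩, hSZ hpS, hSZ hqS⟩,
      hSZ hpS, hSZ hqS⟩
  have hSv : ∀ k, S ⊆ v k := by
    intro k
    induction k with
    | zero => exact hSV
    | succ k ih => rw [hvs k]; exact hSstep (v k) ih
  -- fixed point at stage n
  have hfix : v (n+1) = v n := by
    obtain ⟨k, hkn, hkfix⟩ : ∃ k ≤ n, v (k+1) = v k := by
      by_contra hcon
      push_neg at hcon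
      have hcard : ∀ k, k ≤ n+1 → (v k).ncard + k ≤ n := by
        intro k
        induction k with
        | zero =>
          intro _
          have h0 : (v 0).ncard ≤ n := by
            have h1 : (v 0).ncard ≤ (Set.univ : Set α).ncard :=
              Set.ncard_le_ncard (Set.subset_univ _) (Set.toFinite _)
            have h2 : (Set.univ : Set α).ncard = Fintype.card α := by
              rw [Set.ncard_univ, Nat.card_eq_fintype_card]
            omega
          omega
        | succ k ih =>
          intro hk1
          have hk : k ≤ n := by omega
          have hne := hcon k hk
          have hss : v (k+1) ⊂ v k :=
            (Set.ssubset_iff_subset_ne).mpr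
              ⟨fun x hx => (hvsub k hx).1, hne⟩
          have hlt := Set.ncard_lt_ncard hss (Set.toFinite _)
          have := ih (by omega)
          omega
      have := hcard (n+1) (le_refl _)
      omega
    have hconst : ∀ j, v (k + j) = v k := by
      intro j
      induction j with
      | zero => rfl
      | succ j ih =>
        have he : k + (j+1) = (k+j) + 1 := by omega
        rw [he, hvs (k+j), ih, ← hvs k, hkfix]
    have h1 : v n = v k := by
      have := hconst (n - k); rwa [show k + (n-k) = n by omega] at this
    have h2 : v (n+1) = v k := by
      have := hconst (n + 1 - k); rwa [show k + (n+1-k) = n+1 by omega] at this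
    rw [h1, h2]
  have hfixpt : (CADMG.closureStep A (G.induce (v n))).V = v n := by
    rw [← hvs n]; exact hfix
  -- apply the reachability invariant to G[S]
  have hSn' : S ⊆ (G.induce S).V := fun s hs => ⟨hs, hSV hs⟩
  obtain ⟨-, hsub⟩ :=
    CADMG.reach_invariant hreach A S (v n) hAS hfixpt (hvV n) hSn'
  have hIC : G.intrinsicClosure A = v n := rfl
  rw [hIC]
  exact Set.Subset.antisymm (fun x hx => (hsub hx).1) (hSv n)
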